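/- Let k ≥ 1 be an integer, n = 12k + 6, β = 2π/n, and A_j = exp(iβj) ∈ ℂ (indices modulo n) the vertices of the regular (12k+6)-gon inscribed in the unit circle. Then the three diagonals A_0A_{3k+1}, A_1A_{3k+2}, and A_{2k+1}A_{10k+5} are concurrent: there exists a point of ℂ lying on all three lines. Equivalently, the intersection point φ_{3k+1}(A_1) of the consecutive (3k+1)-th diagonals A_0A_{3k+1} and A_1A_{3k+2} lies on the line through A_{2k+1} and A_{10k+5}. (This extra incidence is why K(12k+6; 3k+1, 4k+2), K(12k+6; 3k+2, 4k+2), K(12k+6; 3k+1, 3k+2) fail to be ((3n)_4) configurations.) -/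

import Mathlib

open Real

private lemma exists_real_smul (u v z : ℂ) (huv : v - u ≠ 0)
    (h : (starRingEnd ℂ) (z - u) * (v - u) = (z - u) * (starRingEnd ℂ) (v - u)) :
    ∃ t : ℝ, z = u + t • (v - u) := by
  refine ⟨((z - u) / (v - u)).re, ?_⟩
  have hcv : (starRingEnd ℂ) (v - u) ≠ 0 := by
    simpa only [ne_eq, map_eq_zero] using huv
  have hc : (starRingEnd ℂ) ((z - u) / (v - u)) = (z - u) / (v - u) := by
    rw [map_div₀, div_eq_div_iff hcv huv]
    linear_combination h
  have him : ((z - u) / (v - u)).im = 0 := Complex.conj_eq_iff_im.mp hc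
  have hre : ((((z - u) / (v - u)).re : ℝ) : ℂ) = (z - u) / (v - u) := by
    rw [Complex.ext_iff]; simp [him]
  rw [Complex.real_smul, hre]
  field_simp
  ring

/-- in the regular `(12k+6)`-gon (`k ≥ 1`), the three diagonals
`A 0 A (3k+1)`, `A 1 A (3k+2)` and `A (2k+1) A (10k+5)` are concurrent:
some point of ℂ lies on all three lines. -/
theorem stmt_7 (k : ℤ) (hk : 1 ≤ k) (n : ℤ) (hn : n = 12 * k + 6)
    (β : ℝ) (hβ : β = 2 * π / n)
    (A : ℤ → ℂ) (hA : ∀ j : ℤ, A j = Complex.exp ((β * j : ℝ) * Complex.I)) :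
    ∃ p : ℂ,
      (∃ t : ℝ, p = A 0 + t • (A (3 * k + 1) - A 0)) ∧
      (∃ t : ℝ, p = A 1 + t • (A (3 * k + 2) - A 1)) ∧
      (∃ t : ℝ, p = A (2 * k + 1) + t • (A (10 * k + 5) - A (2 * k + 1))) := by
  have hkr : (1:ℝ) ≤ (k:ℝ) := by exact_mod_cast hk
  have hnr : (n:ℝ) = 12 * (k:ℝ) + 6 := by exact_mod_cast congrArg (Int.cast : ℤ → ℝ) hn
  have hn0 : (n:ℝ) ≠ 0 := by rw [hnr]; nlinarith
  have hnpos : (0:ℝ) < (n:ℝ) := by rw [hnr]; nlinarith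
  set w : ℂ := Complex.exp ((π / (n:ℝ) : ℝ) * Complex.I) with hw
  have hw0 : w ≠ 0 := Complex.exp_ne_zero _
  -- exp of negative real times I is inverse
  have eneg : ∀ x : ℝ, Complex.exp ((-x : ℝ) * Complex.I) = (Complex.exp ((x:ℝ) * Complex.I))⁻¹ := by
    intro x; rw [← Complex.exp_neg]; congr 1; push_cast; ring
  have eI : Complex.exp ((π/2 : ℝ) * Complex.I) = Complex.I := by
    rw [Complex.exp_mul_I, ← Complex.ofReal_cos, ← Complex.ofReal_sin,
      Real.cos_pi_div_two, Real.sin_pi_div_two]; simp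
  -- conjugation of unit exponentials
  have hconj : ∀ x : ℝ, (starRingEnd ℂ) (Complex.exp ((x:ℝ) * Complex.I)) = (Complex.exp ((x:ℝ) * Complex.I))⁻¹ := by
    intro x; rw [← Complex.exp_conj, ← Complex.exp_neg]; congr 1; simp [Complex.ext_iff]
  have hconjw : (starRingEnd ℂ) w = w⁻¹ := hconj _
  -- w has positive real part, hence w ≠ I
  have hwre : w.re = Real.cos (π / n) := Complex.exp_ofReal_mul_I_re _
  have hπn : 0 < π / (n:ℝ) ∧ π / (n:ℝ) < π / 2 := by
    constructor
    · positivity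
    · rw [div_lt_div_iff₀ hnpos two_pos]
      nlinarith [Real.pi_pos]
  have hwI : w ≠ Complex.I := by
    intro h
    have : w.re = 0 := by rw [h]; simp
    rw [hwre] at this
    exact absurd this (ne_of_gt (Real.cos_pos_of_mem_Ioo ⟨by linarith [hπn.1, Real.pi_pos], hπn.2⟩))
  have hwmI : w - Complex.I ≠ 0 := sub_ne_zero.mpr hwI
  -- the vertex values
  have eA0 : A 0 = 1 := by rw [hA]; push_cast; simp
  have eA1 : A 1 = w * w := by
    have harg : β * ((1 : ℤ) : ℝ) = π/(n:ℝ) + π/(n:ℝ) := by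
      rw [hβ]; push_cast; field_simp; ring
    rw [hA, harg, Complex.ofReal_add, add_mul, Complex.exp_add]
  have eA3k1 : A (3*k+1) = Complex.I * w⁻¹ := by
    have harg : β * ((3*k+1 : ℤ) : ℝ) = π/2 + -(π/(n:ℝ)) := by
      rw [hβ, hnr]; push_cast; field_simp; ring
    rw [hA, harg, Complex.ofReal_add, add_mul, Complex.exp_add, eI, eneg]
  have eA3k2 : A (3*k+2) = Complex.I * w := by
    have harg : β * ((3*k+2 : ℤ) : ℝ) = π/2 + π/(n:ℝ) := by
      rw [hβ, hnr]; push_cast; field_simp; ring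
    rw [hA, harg, Complex.ofReal_add, add_mul, Complex.exp_add, eI]
  have eA2k1 : A (2*k+1) = (1/2 : ℂ) + ((Real.sqrt 3 / 2 : ℝ) : ℂ) * Complex.I := by
    have harg : β * ((2*k+1 : ℤ) : ℝ) = π/3 := by
      rw [hβ, hnr]; push_cast; field_simp; ring
    rw [hA, harg, Complex.exp_mul_I, ← Complex.ofReal_cos, ← Complex.ofReal_sin,
      Real.cos_pi_div_three, Real.sin_pi_div_three]
    push_cast; ring
  have eA10k5 : A (10*k+5) = (1/2 : ℂ) - ((Real.sqrt 3 / 2 : ℝ) : ℂ) * Complex.I := by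
    have harg : β * ((10*k+5 : ℤ) : ℝ) = -(π/3) + 2*π := by
      rw [hβ, hnr]; push_cast; field_simp; ring
    rw [hA, harg, Complex.exp_mul_I, ← Complex.ofReal_cos, ← Complex.ofReal_sin,
      Real.cos_add_two_pi, Real.sin_add_two_pi, Real.cos_neg, Real.sin_neg,
      Real.cos_pi_div_three, Real.sin_pi_div_three]
    push_cast; ring
  -- auxiliary nonvanishing facts
  have h1Iw : (1 : ℂ) + Complex.I * w ≠ 0 := by
    have hid : (1 : ℂ) + Complex.I * w = Complex.I * (w - Complex.I) := by
      rw [mul_sub, Complex.I_mul_I]; ring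
    rw [hid]
    exact mul_ne_zero Complex.I_ne_zero hwmI
  have hinvI : w⁻¹ + Complex.I ≠ 0 := by
    intro h
    apply h1Iw
    have h2 : (w⁻¹ + Complex.I) * w = 1 + Complex.I * w := by
      field_simp
    rw [h, zero_mul] at h2
    exact h2.symm
  have h1wI : (1 : ℂ) + w * Complex.I ≠ 0 := by rw [mul_comm]; exact h1Iw
  refine ⟨w / (w - Complex.I), ?_, ?_, ?_⟩
  · rw [eA0, eA3k1]
    apply exists_real_smul _ _ _ ?hne
    case hne =>
      intro h
      apply hwI
      have h' := sub_eq_zero.mp h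
      field_simp at h'
      exact h'.symm
    simp only [map_sub, map_mul, map_one, map_inv₀, map_div₀, Complex.conj_I, hconjw, inv_inv,
      sub_neg_eq_add]
    field_simp
    linear_combination (Complex.I * w ^ 3 + Complex.I * w) * Complex.I_sq
  · rw [eA1, eA3k2]
    apply exists_real_smul _ _ _ ?hne2
    case hne2 =>
      intro h
      apply hwI
      have h' := sub_eq_zero.mp h
      exact (mul_right_cancel₀ hw0 h').symm
    simp only [map_sub, map_mul, map_one, map_inv₀, map_div₀, Complex.conj_I, hconjw, inv_inv,
      sub_neg_eq_add]
    field_simp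
    linear_combination (1 + w*Complex.I + w^3*Complex.I - w^4) * Complex.I_sq
  · rw [eA2k1, eA10k5]
    have hs3 : ((Real.sqrt 3 : ℝ) : ℂ) ≠ 0 := by
      exact_mod_cast Real.sqrt_ne_zero'.mpr (by norm_num)
    apply exists_real_smul _ _ _ ?hne3
    case hne3 =>
      intro h
      have h2 : ((Real.sqrt 3 / 2 : ℝ) : ℂ) * Complex.I = 0 := by
        linear_combination (-1/2 : ℂ) * h
      rcases mul_eq_zero.mp h2 with h3 | h3
      · apply hs3
        push_cast at h3
        linear_combination 2 * h3
      · exact Complex.I_ne_zero h3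
    simp only [map_sub, map_mul, map_add, map_one, map_inv₀, map_div₀, Complex.conj_I, hconjw,
      inv_inv, sub_neg_eq_add, Complex.conj_ofReal, map_ofNat, map_one]
    field_simp
    linear_combination (-8 * Complex.I * w * ((Real.sqrt 3 / 2 : ℝ) : ℂ)) * Complex.I_sq
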